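/- Let R be a ring and X a compact right R-module. If X is not equal to the union of its proper closed submodules of finite index, then X is almost monothetic. -/

import Mathlib

/-- A compact right `R`-module `X` is almost monothetic if every finite cover of `X` by
closed submodules contains `X` (i.e. `⊤`) itself. Right modules are `Rᵐᵒᵖ`-modules. -/
def AlmostMonothetic (R X : Type*) [Ring R] [AddCommGroup X] [Module Rᵐᵒᵖ X]
    [TopologicalSpace X] : Prop :=
  ∀ M : Finset (Submodule Rᵐᵒᵖ X), (∀ N ∈ M, IsClosed (N : Set X)) →
    (∀ x : X, ∃ N ∈ M, x ∈ N) → ⊤ ∈ M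

open scoped Pointwise in
/-- If a compact right `R`-module `X` is not covered by its proper closed submodules of
finite index, then `X` is almost monothetic. -/
theorem almostMonothetic_of_not_covered (R X : Type*) [Ring R] [AddCommGroup X]
    [Module Rᵐᵒᵖ X] [TopologicalSpace X] [CompactSpace X] [T2Space X]
    [IsTopologicalAddGroup X]
    (hcont : ∀ r : Rᵐᵒᵖ, Continuous fun x : X => r • x)
    (h : ∃ x : X, ∀ N : Submodule Rᵐᵒᵖ X,
      IsClosed (N : Set X) → Finite (X ⧸ N) → N ≠ ⊤ → x ∉ N) :
    AlmostMonothetic R X := by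
  obtain ⟨x, hx⟩ := h
  intro M hclosed hcover
  classical
  have hcovers : ⋃ N ∈ M, (0 : X) +ᵥ ((Submodule.toAddSubgroup N : AddSubgroup X) : Set X)
      = Set.univ := by
    simp only [zero_vadd]
    ext y
    simp only [Set.mem_iUnion, Set.mem_univ, iff_true]
    obtain ⟨N, hN, hyN⟩ := hcover y
    exact ⟨N, hN, hyN⟩
  have := AddSubgroup.leftCoset_cover_filter_FiniteIndex (g := fun _ => (0 : X)) hcovers
  have hxmem : x ∈ (Set.univ : Set X) := Set.mem_univ x
  rw [← this] at hxmem
  simp only [Set.mem_iUnion, zero_vadd, Finset.mem_filter] at hxmem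
  obtain ⟨N, ⟨hNM, hNfi⟩, hxN⟩ := hxmem
  have hfin : Finite (X ⧸ N) := by
    have : Finite (X ⧸ N.toAddSubgroup) := @AddSubgroup.finite_quotient_of_finiteIndex _ _ _ hNfi
    exact this
  by_cases hNtop : N = ⊤
  · rwa [hNtop] at hNM
  · exact absurd hxN (hx N (hclosed N hNM) hfin hNtop)
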